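/- Let μ be a non-zero finite Borel measure on ℝⁿ not supported in a lower-dimensional subspace, and let M be the interior of the convex hull of the support of μ. For any x₀ ∈ M there exists a constant C > 0 such that every non-negative μ-integrable convex function φ : ℝⁿ → [0,∞] satisfies φ(x₀) ≤ C ∫_{ℝⁿ} φ dμ. -/

import Mathlib

open MeasureTheory

/-- The support of a Borel measure: points all of whose open neighbourhoods have
positive measure. -/
def msupport {n : ℕ} (μ : Measure (EuclideanSpace ℝ (Fin n))) :
    Set (EuclideanSpace ℝ (Fin n)) :=
  {x | ∀ U : Set (EuclideanSpace ℝ (Fin n)), x ∈ U → IsOpen U → 0 < μ U}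

open Metric in
lemma msupport_exists_gt {n : ℕ} (μ : Measure (EuclideanSpace ℝ (Fin n)))
    (x₀ : EuclideanSpace ℝ (Fin n))
    (hx₀ : x₀ ∈ interior (convexHull ℝ (msupport μ)))
    (f : EuclideanSpace ℝ (Fin n) →L[ℝ] ℝ) (hf : f ≠ 0) :
    ∃ p ∈ msupport μ, f x₀ < f p := by
  by_contra h
  push_neg at h
  have hsub : msupport μ ⊆ {x | f x ≤ f x₀} := fun p hp => h p hp
  have hconv : Convex ℝ {x | f x ≤ f x₀} :=
    convex_halfSpace_le ⟨f.map_add, f.map_smul⟩ _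
  have h2 : convexHull ℝ (msupport μ) ⊆ {x | f x ≤ f x₀} := convexHull_min hsub hconv
  have h3 : x₀ ∈ interior {x | f x ≤ f x₀} := interior_mono h2 hx₀
  rw [mem_interior_iff_mem_nhds, Metric.mem_nhds_iff] at h3
  obtain ⟨δ, hδ, hball⟩ := h3
  obtain ⟨y, hy⟩ := DFunLike.ne_iff.mp hf
  simp only [ContinuousLinearMap.zero_apply] at hy
  obtain ⟨z, hz⟩ : ∃ z, 0 < f z := by
    rcases Ne.lt_or_gt hy with h' | h'
    · exact ⟨-y, by simpa using h'⟩
    · exact ⟨y, h'⟩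
  have hzn : 0 < ‖z‖ := by
    rw [norm_pos_iff]
    rintro rfl; simp at hz
  set c : ℝ := δ / (2 * ‖z‖) with hc
  have hcpos : 0 < c := by positivity
  have hcz : c * ‖z‖ = δ / 2 := by
    rw [hc]; field_simp
  have hxball : x₀ + c • z ∈ ball x₀ δ := by
    rw [mem_ball, dist_eq_norm]
    have h5 : x₀ + c • z - x₀ = c • z := by abel
    rw [h5, norm_smul, Real.norm_of_nonneg hcpos.le, hcz]
    linarith
  have h6 := hball hxball
  simp only [Set.mem_setOf_eq, map_add] at h6
  have h7 : f (c • z) = c * f z := by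
    rw [f.map_smul, smul_eq_mul]
  nlinarith

set_option maxHeartbeats 1000000 in
/-- If `μ` is a non-zero finite Borel measure not supported in a lower-dimensional
subspace and `x₀` lies in the interior `M` of the convex hull of the support of `μ`,
then there is `C > 0` such that every non-negative `μ`-integrable convex function `φ`
satisfies `φ(x₀) ≤ C ∫ φ dμ`. -/
theorem convex_value_le_integral {n : ℕ} (μ : Measure (EuclideanSpace ℝ (Fin n)))
    [IsFiniteMeasure μ] (hμ : μ ≠ 0)
    (x₀ : EuclideanSpace ℝ (Fin n))
    (hx₀ : x₀ ∈ interior (convexHull ℝ (msupport μ))) :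
    ∃ C > (0 : ℝ), ∀ φ : EuclideanSpace ℝ (Fin n) → ℝ,
      ConvexOn ℝ Set.univ φ → (∀ x, 0 ≤ φ x) → Integrable φ μ →
        φ x₀ ≤ C * ∫ x, φ x ∂μ := by
  rcases Nat.eq_zero_or_pos n with hn | hn
  · -- trivial case: the space is a single point
    subst hn
    have hss : Subsingleton (EuclideanSpace ℝ (Fin 0)) :=
      ⟨fun a b => by ext i; exact i.elim0⟩
    have hpos : 0 < (μ Set.univ).toReal :=
      ENNReal.toReal_pos (Measure.measure_univ_pos.2 hμ).ne' (measure_ne_top μ _)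
    refine ⟨(μ Set.univ).toReal⁻¹, inv_pos.2 hpos, fun φ hc hφ hi => ?_⟩
    have hcongr : ∀ x, φ x = φ x₀ := fun x => by rw [Subsingleton.elim x x₀]
    rw [integral_congr_ae (Filter.Eventually.of_forall hcongr), integral_const,
      smul_eq_mul, Measure.real, inv_mul_cancel_left₀ hpos.ne']
  -- main case
  -- a canonical unit functional
  have hv : ‖(EuclideanSpace.single (⟨0, hn⟩ : Fin n) (1:ℝ))‖ = 1 := by
    rw [EuclideanSpace.norm_single]; norm_num
  set f₀ : EuclideanSpace ℝ (Fin n) →L[ℝ] ℝ :=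
    InnerProductSpace.toDual ℝ (EuclideanSpace ℝ (Fin n))
      (EuclideanSpace.single (⟨0, hn⟩ : Fin n) (1:ℝ)) with hf₀
  have hf₀n : ‖f₀‖ = 1 := by
    rw [hf₀, (InnerProductSpace.toDual ℝ (EuclideanSpace ℝ (Fin n))).norm_map, hv]
  -- local uniform positivity of half-space measures
  have key : ∀ f : {g : EuclideanSpace ℝ (Fin n) →L[ℝ] ℝ // ‖g‖ = 1},
      ∃ η > (0:ℝ), ∃ c : ENNReal, 0 < c ∧
        ∀ g : EuclideanSpace ℝ (Fin n) →L[ℝ] ℝ, dist g f.1 < η →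
          c ≤ μ {x | g x₀ < g x} := by
    rintro ⟨f, hfn⟩
    have hfne : f ≠ 0 := by
      intro h; rw [h] at hfn; simp at hfn
    obtain ⟨p, hp, hfp⟩ := msupport_exists_gt μ x₀ hx₀ f hfne
    set δ : ℝ := (f p - f x₀) / 2 with hδdef
    have hδ : 0 < δ := by simp only [hδdef]; linarith
    refine ⟨δ / (‖p‖ + δ + ‖x₀‖ + 1), by positivity, μ (Metric.ball p δ),
      hp _ (Metric.mem_ball_self hδ) Metric.isOpen_ball, fun g hg => ?_⟩
    refine measure_mono fun x hx => ?_
    simp only [Metric.mem_ball, dist_eq_norm] at hx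
    simp only [Set.mem_setOf_eq]
    have h1 : f x - f x₀ ≥ δ := by
      have h2 : |f (x - p)| ≤ ‖x - p‖ := by
        calc |f (x - p)| ≤ ‖f‖ * ‖x - p‖ := f.le_opNorm _
          _ = ‖x - p‖ := by rw [hfn, one_mul]
      rw [map_sub] at h2
      have := abs_le.mp h2
      simp only [hδdef]
      linarith
    have hxn : ‖x‖ ≤ ‖p‖ + δ := by
      calc ‖x‖ = ‖x - p + p‖ := by rw [sub_add_cancel]
        _ ≤ ‖x - p‖ + ‖p‖ := norm_add_le _ _
        _ ≤ ‖p‖ + δ := by linarith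
    have h3 : |(g - f) x| ≤ ‖g - f‖ * ‖x‖ := (g - f).le_opNorm x
    have h4 : |(g - f) x₀| ≤ ‖g - f‖ * ‖x₀‖ := (g - f).le_opNorm x₀
    rw [dist_eq_norm] at hg
    have hgf : ‖g - f‖ * (‖x‖ + ‖x₀‖) < δ := by
      have hb : ‖x‖ + ‖x₀‖ ≤ ‖p‖ + δ + ‖x₀‖ := by linarith
      calc ‖g - f‖ * (‖x‖ + ‖x₀‖) ≤ ‖g - f‖ * (‖p‖ + δ + ‖x₀‖) := by
            apply mul_le_mul_of_nonneg_left hb (norm_nonneg _)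
        _ < δ / (‖p‖ + δ + ‖x₀‖ + 1) * (‖p‖ + δ + ‖x₀‖ + 1) := by
            apply mul_lt_mul' hg.le ?_ ?_ (by positivity)
            · linarith
            · positivity
        _ = δ := by field_simp
    have h5 := abs_le.mp h3
    have h6 := abs_le.mp h4
    simp only [ContinuousLinearMap.sub_apply] at h5 h6
    nlinarith [norm_nonneg x, norm_nonneg x₀, mul_nonneg (norm_nonneg (g-f)) (norm_nonneg x)]
  choose η hη c hc H using key
  -- compactness of the unit sphere of the dual
  have hScpt : IsCompact (Metric.sphere (0 : EuclideanSpace ℝ (Fin n) →L[ℝ] ℝ) 1) :=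
    isCompact_sphere _ _
  have hcov : Metric.sphere (0 : EuclideanSpace ℝ (Fin n) →L[ℝ] ℝ) 1 ⊆
      ⋃ f : {g : EuclideanSpace ℝ (Fin n) →L[ℝ] ℝ // ‖g‖ = 1}, Metric.ball f.1 (η f) := by
    intro g hg
    rw [Metric.mem_sphere, dist_zero_right] at hg
    exact Set.mem_iUnion.2 ⟨⟨g, hg⟩, Metric.mem_ball_self (hη _)⟩
  obtain ⟨t, ht⟩ := hScpt.elim_finite_subcover _ (fun f => Metric.isOpen_ball) hcov
  set m : ENNReal := t.inf c with hm
  have hmpos : 0 < m := by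
    rw [hm, Finset.lt_inf_iff (by simp : (0:ENNReal) < ⊤)]
    exact fun f _ => hc f
  have hmle : ∀ g : EuclideanSpace ℝ (Fin n) →L[ℝ] ℝ, ‖g‖ = 1 →
      m ≤ μ {x | g x₀ < g x} := by
    intro g hg
    have hgs : g ∈ Metric.sphere (0 : EuclideanSpace ℝ (Fin n) →L[ℝ] ℝ) 1 := by
      rw [Metric.mem_sphere, dist_zero_right]; exact hg
    obtain ⟨f, hf⟩ := Set.mem_iUnion₂.mp (ht hgs)
    obtain ⟨hft, hgf⟩ := hf
    exact le_trans (Finset.inf_le hft) (H f g (Metric.mem_ball.mp hgf))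
  have hmtop : m ≠ ⊤ := by
    refine ne_top_of_le_ne_top (measure_ne_top μ Set.univ) ?_
    exact le_trans (hmle f₀ hf₀n) (measure_mono (Set.subset_univ _))
  set M : ℝ := m.toReal with hM
  have hMpos : 0 < M := ENNReal.toReal_pos hmpos.ne' hmtop
  refine ⟨2 / M, by positivity, fun φ hconv hφ hint => ?_⟩
  have hI : 0 ≤ ∫ x, φ x ∂μ := integral_nonneg hφ
  rcases (hφ x₀).eq_or_lt with h0 | h0
  · rw [← h0]; positivity
  set ε : ℝ := φ x₀ / 2 with hε
  have hεpos : 0 < ε := by positivity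
  have hcont : Continuous φ := by
    exact continuousOn_univ.mp (hconv.continuousOn isOpen_univ)
  set A : Set (EuclideanSpace ℝ (Fin n)) := {x | φ x < ε} with hA
  have hAopen : IsOpen A := isOpen_lt hcont continuous_const
  have hAconv : Convex ℝ A := by
    have := hconv.convex_lt ε
    simpa using this
  have hx₀A : x₀ ∉ A := by
    simp only [hA, Set.mem_setOf_eq, not_lt, hε]
    linarith
  -- find a unit functional separating
  have hgex : ∃ g : EuclideanSpace ℝ (Fin n) →L[ℝ] ℝ, ‖g‖ = 1 ∧
      {x | g x₀ < g x} ⊆ {x | ε ≤ φ x} := by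
    rcases Set.eq_empty_or_nonempty A with hAe | ⟨a, ha⟩
    · refine ⟨f₀, hf₀n, fun x _ => ?_⟩
      by_contra hx
      rw [Set.mem_setOf_eq, not_le] at hx
      exact Set.eq_empty_iff_forall_notMem.mp hAe x hx
    · obtain ⟨f, hf⟩ := geometric_hahn_banach_open_point hAconv hAopen hx₀A
      have hfne : f ≠ 0 := by
        rintro rfl
        exact absurd (hf a ha) (by simp)
      have hfn : 0 < ‖f‖ := norm_pos_iff.mpr hfne
      refine ⟨‖f‖⁻¹ • f, ?_, fun x hx => ?_⟩
      · exact norm_smul_inv_norm hfne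
      · simp only [Set.mem_setOf_eq, ContinuousLinearMap.smul_apply, smul_eq_mul] at hx
        have hfx : f x₀ < f x := (mul_lt_mul_iff_right₀ (inv_pos.mpr hfn)).mp hx
        by_contra hcon
        rw [Set.mem_setOf_eq, not_le] at hcon
        exact absurd (hf x hcon) (not_lt.mpr hfx.le)
  obtain ⟨g, hgn, hgsub⟩ := hgex
  have h1 : m ≤ μ {x | ε ≤ φ x} := le_trans (hmle g hgn) (measure_mono hgsub)
  have h2 : M ≤ (μ {x | ε ≤ φ x}).toReal :=
    ENNReal.toReal_mono (measure_ne_top μ _) h1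
  have h3 : ε * (μ {x | ε ≤ φ x}).toReal ≤ ∫ x, φ x ∂μ :=
    mul_meas_ge_le_integral_of_nonneg (Filter.Eventually.of_forall hφ) hint ε
  have h4 : ε * M ≤ ∫ x, φ x ∂μ := by
    calc ε * M ≤ ε * (μ {x | ε ≤ φ x}).toReal :=
          mul_le_mul_of_nonneg_left h2 hεpos.le
      _ ≤ _ := h3
  rw [hε] at h4
  rw [div_mul_eq_mul_div, le_div_iff₀ hMpos]
  linarith
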